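/- Let R be a commutative ring and p ∈ R. With T, T', E₁, E₂, J, J', N the standard data below, the R-module N consists exactly of the maps f_c : T' → T, f_c(u,v) = (c·u, p·c·v) for c ∈ R; in particular N is a free R-module of rank 1 generated by f₁ : (u,v) ↦ (u, p·v). -/

import Mathlib

section

variable (R : Type*) [CommRing R] (p : R)

/-- The endomorphism `E₁(u,v) = (u,0)` of the standard module `R²`. -/
def E₁ : R × R →ₗ[R] R × R := (LinearMap.inl R R R).comp (LinearMap.fst R R R)

/-- The endomorphism `E₂(u,v) = (0,v)` of the standard module `R²`. -/
def E₂ : R × R →ₗ[R] R × R := (LinearMap.inr R R R).comp (LinearMap.snd R R R)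

/-- The endomorphism `J(u,v) = (v, p·u)` of the standard module `T`. -/
def J : R × R →ₗ[R] R × R :=
  (LinearMap.inl R R R).comp (LinearMap.snd R R R)
    + (LinearMap.inr R R R).comp (p • LinearMap.fst R R R)

/-- The endomorphism `J'(u,v) = (p·v, u)` of the twisted standard module `T'`. -/
def J' : R × R →ₗ[R] R × R :=
  (LinearMap.inl R R R).comp (p • LinearMap.snd R R R)
    + (LinearMap.inr R R R).comp (LinearMap.fst R R R)

end

lemma E₁_apply {R : Type*} [CommRing R] (x : R × R) : E₁ R x = (x.1, 0) := rfl
lemma E₂_apply {R : Type*} [CommRing R] (x : R × R) : E₂ R x = (0, x.2) := rfl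
lemma J_apply {R : Type*} [CommRing R] (p : R) (x : R × R) :
    J R p x = (x.2, p * x.1) := by
  simp [J, LinearMap.add_apply, LinearMap.comp_apply]
lemma J'_apply {R : Type*} [CommRing R] (p : R) (x : R × R) :
    J' R p x = (p * x.2, x.1) := by
  simp [J', LinearMap.add_apply, LinearMap.comp_apply]

/-- With `T, T', E₁, E₂, J, J'` the standard data, the module `N` of `R`-linear maps
`f : T' → T` commuting with `E₁, E₂` and intertwining `J'` with `J` consists exactly of the
maps `f_c(u,v) = (c·u, p·c·v)` for `c ∈ R`; in particular `N` is a free `R`-module of rank 1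
generated by `f₁ : (u,v) ↦ (u, p·v)` (the case `c = 1`, with unique coefficient `c`). -/
theorem stmt14 {R : Type*} [CommRing R] (p : R) (f : R × R →ₗ[R] R × R) :
    (f ∘ₗ E₁ R = E₁ R ∘ₗ f ∧ f ∘ₗ E₂ R = E₂ R ∘ₗ f ∧ f ∘ₗ J' R p = J R p ∘ₗ f)
      ↔ ∃! c : R, ∀ u v : R, f (u, v) = (c * u, p * (c * v)) := by
  constructor
  · rintro ⟨h1, h2, h3⟩
    set a := (f (1, 0)).1 with ha
    have h2' := LinearMap.congr_fun h2 (1, 0)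
    simp only [LinearMap.comp_apply, E₂_apply] at h2'
    have e2 : (f (1, 0)).2 = 0 := by
      have := congrArg Prod.snd h2'
      simpa [Prod.mk_zero_zero] using this.symm
    have h1' := LinearMap.congr_fun h1 (0, 1)
    simp only [LinearMap.comp_apply, E₁_apply] at h1'
    have e1 : (f (0, 1)).1 = 0 := by
      have := congrArg Prod.fst h1'
      simpa [Prod.mk_zero_zero] using this.symm
    have h3' := LinearMap.congr_fun h3 (1, 0)
    simp only [LinearMap.comp_apply, J'_apply, J_apply] at h3'
    have f10 : f (1, 0) = (a, 0) := Prod.ext ha.symm e2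
    have f01 : f (0, 1) = (0, p * a) := by
      rw [show ((p * (0:R), (1:R)) = ((0:R), (1:R))) by simp] at h3'
      rw [h3', f10]
    have key : ∀ u v : R, f (u, v) = (a * u, p * (a * v)) := by
      intro u v
      have : (u, v) = u • ((1:R), (0:R)) + v • ((0:R), (1:R)) := by
        simp [Prod.ext_iff]
      rw [this, map_add, map_smul, map_smul, f10, f01]
      simp [Prod.ext_iff]; ring_nf; constructor <;> trivial
    refine ⟨a, key, ?_⟩
    intro c hc
    have := hc 1 0
    rw [key 1 0] at this
    simpa using (congrArg Prod.fst this).symm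
  · rintro ⟨c, hc, -⟩
    have hc' : ∀ x : R × R, f x = (c * x.1, p * (c * x.2)) := fun x => hc x.1 x.2
    refine ⟨?_, ?_, ?_⟩ <;> refine LinearMap.ext fun x => ?_ <;>
      simp only [LinearMap.comp_apply, E₁_apply, E₂_apply, J_apply, J'_apply, hc'] <;>
      simp [Prod.ext_iff] <;> ring
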